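/- Consider a discrete-time affine set-valued recursion: suppose matrices A(t), B(t) and zonotopes W(t) = Z(d(t), G_w(t)) are given, and parameters x̄_t, ū_t, T_t, M_t satisfy [A(t)T_t + B(t)M_t, G_w(t)] = T_{t+1} and A(t)x̄_t + B(t)ū_t + d(t) = x̄_{t+1} for all t < h. Define Ω(t) = Z(x̄_t, T_t), Θ(t) = Z(ū_t, M_t) and the controller that maps x = x̄_t + T_t ζ to u = ū_t + M_t ζ. Then for every t < h, every x(t) ∈ Ω(t) of the form x̄_t + T_t ζ with ‖ζ‖_∞ ≤ 1, and every w(t) ∈ W(t), the successor x(t+1) = A(t)x(t) + B(t)u(t) + w(t) with u(t) = ū_t + M_t ζ lies in Ω(t+1), and u(t) ∈ Θ(t). -/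

import Mathlib

/-- The zonotope `Z(c,G) = {c + G b : ‖b‖_∞ ≤ 1}`. -/
def zono {n : ℕ} {ι : Type*} [Fintype ι] (c : Fin n → ℝ)
    (G : Matrix (Fin n) ι ℝ) : Set (Fin n → ℝ) :=
  {x | ∃ b : ι → ℝ, (∀ i, |b i| ≤ 1) ∧ x = c + G.mulVec b}

/-- Sufficiency of the linear constraints `[A(t)T_t + B(t)M_t, G_w(t)] = T_{t+1}` and
`A(t)x̄_t + B(t)ū_t + d(t) = x̄_{t+1}` for viability: with `Ω(t) = Z(x̄_t, T_t)`,
`Θ(t) = Z(ū_t, M_t)`, and the controller mapping `x = x̄_t + T_t ζ` to `u = ū_t + M_t ζ`,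
every successor `A(t)x(t) + B(t)u(t) + w(t)` with `w(t) ∈ W(t) = Z(d(t), G_w(t))`
lies in `Ω(t+1)`, and `u(t) ∈ Θ(t)`. -/
theorem viable_sets_sufficiency {n m : ℕ} (h : ℕ) (q l : ℕ → ℕ)
    (hq : ∀ t, q (t + 1) = q t + l t)
    (A : ℕ → Matrix (Fin n) (Fin n) ℝ) (B : ℕ → Matrix (Fin n) (Fin m) ℝ)
    (d : (t : ℕ) → Fin n → ℝ) (Gw : (t : ℕ) → Matrix (Fin n) (Fin (l t)) ℝ)
    (xbar : (t : ℕ) → Fin n → ℝ) (ubar : (t : ℕ) → Fin m → ℝ)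
    (T : (t : ℕ) → Matrix (Fin n) (Fin (q t)) ℝ)
    (M : (t : ℕ) → Matrix (Fin m) (Fin (q t)) ℝ)
    (hT : ∀ t < h, T (t + 1) =
      Matrix.reindex (Equiv.refl (Fin n)) (finSumFinEquiv.trans (finCongr (hq t).symm))
        (Matrix.fromCols (A t * T t + B t * M t) (Gw t)))
    (hx : ∀ t < h, (A t).mulVec (xbar t) + (B t).mulVec (ubar t) + d t = xbar (t + 1)) :
    ∀ t < h, ∀ ζ : Fin (q t) → ℝ, (∀ i, |ζ i| ≤ 1) →
      ∀ w ∈ zono (d t) (Gw t),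
        (A t).mulVec (xbar t + (T t).mulVec ζ) +
            (B t).mulVec (ubar t + (M t).mulVec ζ) + w ∈
          zono (xbar (t + 1)) (T (t + 1)) ∧
        ubar t + (M t).mulVec ζ ∈ zono (ubar t) (M t) := by
  intro t ht ζ hζ w hw
  obtain ⟨bw, hbw, rfl⟩ := hw
  set e := finSumFinEquiv.trans (finCongr (hq t).symm) with he
  refine ⟨⟨fun j => Sum.elim ζ bw (e.symm j), ?_, ?_⟩, ⟨ζ, hζ, rfl⟩⟩
  · intro i
    rcases h' : e.symm i with a | a <;> simp [h'] <;> [exact hζ a; exact hbw a]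
  · rw [hT t ht, ← hx t ht]
    have : (Matrix.reindex (Equiv.refl (Fin n)) e
        (Matrix.fromCols (A t * T t + B t * M t) (Gw t))).mulVec
        (fun j => Sum.elim ζ bw (e.symm j)) =
        (Matrix.fromCols (A t * T t + B t * M t) (Gw t)).mulVec (Sum.elim ζ bw) := by
      ext i
      simp [Matrix.reindex_apply, Matrix.mulVec, dotProduct,
        ← Equiv.sum_comp e.symm]
    rw [this, Matrix.fromCols_mulVec_sumElim, Matrix.add_mulVec,
      ← Matrix.mulVec_mulVec, ← Matrix.mulVec_mulVec]
    simp [Matrix.mulVec_add]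
    abel
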